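/- Let n ≥ 1, let β^(2n) = (β_{ij})_{0≤i+j≤2n} be a real sequence, let Ψ(x,y) = (a+bx+cy, d+ex+fy) with a,b,c,d,e,f ∈ ℝ and bf − ce ≠ 0, and let β̃^(2n) be the transformed sequence β̃_{ij} := L_β(Ψ₁^i Ψ₂^j). Let J be the linear map on the space of coefficient vectors of polynomials of degree ≤ n defined by J p̂ = (p∘Ψ)^. Then J is invertible and the moment matrices satisfy M̃(n) = Jᵀ M(n) J. -/

import Mathlib

/-- Index set for the moment matrix of degree `n`:
pairs `(i,j)` of nonnegative integers with `i + j ≤ n`. -/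
abbrev MIdx (n : ℕ) := {ij : Fin (n+1) × Fin (n+1) // (ij.1 : ℕ) + (ij.2 : ℕ) ≤ n}

/-- The moment matrix `M(n)` of a real sequence `β = (β_{ij})`:
`M(n)[(i,j),(k,l)] = β_{i+k, j+l}`. -/
def momentMatrix (n : ℕ) (β : ℕ → ℕ → ℝ) : Matrix (MIdx n) (MIdx n) ℝ :=
  fun p q => β ((p.val.1 : ℕ) + (q.val.1 : ℕ)) ((p.val.2 : ℕ) + (q.val.2 : ℕ))
open MvPolynomial Matrix

/-- The Riesz functional of a sequence `β`: `L_β(Σ p_{ij} x^i y^j) = Σ p_{ij} β_{ij}`. -/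
noncomputable def riesz (β : ℕ → ℕ → ℝ) (p : MvPolynomial (Fin 2) ℝ) : ℝ :=
  ∑ m ∈ p.support, p.coeff m * β (m 0) (m 1)

/-- The sequence transformed by the degree-one map
`Ψ(x,y) = (a + bx + cy, d + ex + fy)`:  `β̃_{ij} := L_β(Ψ₁^i Ψ₂^j)`. -/
noncomputable def transSeq (β : ℕ → ℕ → ℝ) (a b c d e f : ℝ) (i j : ℕ) : ℝ :=
  riesz β ((C a + C b * X 0 + C c * X 1) ^ i * (C d + C e * X 0 + C f * X 1) ^ j)

/-- The coefficient vector `p̂` (truncated at degree `n`) of a bivariate polynomial. -/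
noncomputable def polyVec (n : ℕ) (p : MvPolynomial (Fin 2) ℝ) : MIdx n → ℝ :=
  fun ij => MvPolynomial.coeff
    (Finsupp.single (0 : Fin 2) (ij.val.1 : ℕ) + Finsupp.single (1 : Fin 2) (ij.val.2 : ℕ)) p

/-- Composition `p ∘ Ψ` of a bivariate polynomial with the degree-one map
`Ψ(x,y) = (a + bx + cy, d + ex + fy)`. -/
noncomputable def psiComp (a b c d e f : ℝ) (p : MvPolynomial (Fin 2) ℝ) :
    MvPolynomial (Fin 2) ℝ :=
  MvPolynomial.bind₁ ![C a + C b * X 0 + C c * X 1, C d + C e * X 0 + C f * X 1] p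


/- ### Auxiliary definitions and lemmas -/

/-- The monomial exponent associated to an index in `MIdx n`. -/
noncomputable def midx (n : ℕ) (r : MIdx n) : Fin 2 →₀ ℕ :=
  Finsupp.single (0 : Fin 2) (r.val.1 : ℕ) + Finsupp.single (1 : Fin 2) (r.val.2 : ℕ)

lemma polyVec_eq (n : ℕ) (p : MvPolynomial (Fin 2) ℝ) (r : MIdx n) :
    polyVec n p r = p.coeff (midx n r) := rfl

lemma midx_apply_zero (n : ℕ) (r : MIdx n) : midx n r 0 = (r.val.1 : ℕ) := by
  simp [midx, Finsupp.single_apply]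

lemma midx_apply_one (n : ℕ) (r : MIdx n) : midx n r 1 = (r.val.2 : ℕ) := by
  simp [midx, Finsupp.single_apply]

lemma midx_injective (n : ℕ) : Function.Injective (midx n) := by
  intro r s h
  have h0 : midx n r 0 = midx n s 0 := by rw [h]
  have h1 : midx n r 1 = midx n s 1 := by rw [h]
  rw [midx_apply_zero, midx_apply_zero] at h0
  rw [midx_apply_one, midx_apply_one] at h1
  exact Subtype.ext (Prod.ext (Fin.val_injective h0) (Fin.val_injective h1))

lemma eq_midx (u : Fin 2 →₀ ℕ) :
    Finsupp.single (0 : Fin 2) (u 0) + Finsupp.single (1 : Fin 2) (u 1) = u := by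
  ext i
  fin_cases i <;> simp [Finsupp.single_apply]

lemma finsupp_degree (u : Fin 2 →₀ ℕ) : (u.sum fun _ e => e) = u 0 + u 1 := by
  rw [Finsupp.sum_fintype _ _ (fun _ => rfl)]
  exact Fin.sum_univ_two u

lemma sum_midx (n : ℕ) (P : MvPolynomial (Fin 2) ℝ) (hP : P.totalDegree ≤ n)
    (g : (Fin 2 →₀ ℕ) → ℝ) :
    ∑ r : MIdx n, P.coeff (midx n r) * g (midx n r) = ∑ u ∈ P.support, P.coeff u * g u := by
  have hinj : ∀ x ∈ (Finset.univ : Finset (MIdx n)), ∀ y ∈ Finset.univ,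
      midx n x = midx n y → x = y := fun x _ y _ h => midx_injective n h
  have h1 : ∑ u ∈ Finset.univ.image (midx n), P.coeff u * g u
      = ∑ r : MIdx n, P.coeff (midx n r) * g (midx n r) :=
    Finset.sum_image hinj
  rw [← h1]
  refine (Finset.sum_subset ?_ ?_).symm
  · intro u hu
    have hd : u 0 + u 1 ≤ n := by
      rw [← finsupp_degree]
      exact (MvPolynomial.le_totalDegree hu).trans hP
    refine Finset.mem_image.mpr ⟨⟨(⟨u 0, by omega⟩, ⟨u 1, by omega⟩), by simpa using hd⟩,
      Finset.mem_univ _, ?_⟩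
    simpa [midx] using eq_midx u
  · intro u _ hu
    rw [MvPolynomial.notMem_support_iff.mp hu, zero_mul]

lemma riesz_eq_linearCombination (β : ℕ → ℕ → ℝ) (p : MvPolynomial (Fin 2) ℝ) :
    riesz β p = Finsupp.linearCombination ℝ (fun m : Fin 2 →₀ ℕ => β (m 0) (m 1)) (AddMonoidAlgebra.coeff p) := rfl

lemma riesz_monomial (β : ℕ → ℕ → ℝ) (m : Fin 2 →₀ ℕ) (c : ℝ) :
    riesz β (monomial m c) = c * β (m 0) (m 1) := by
  rw [riesz_eq_linearCombination]
  have h : AddMonoidAlgebra.coeff (monomial m c : MvPolynomial (Fin 2) ℝ) = Finsupp.single m c := rfl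
  rw [h, Finsupp.linearCombination_single, smul_eq_mul]

lemma riesz_mul (n : ℕ) (β : ℕ → ℕ → ℝ) (P Q : MvPolynomial (Fin 2) ℝ)
    (hP : P.totalDegree ≤ n) (hQ : Q.totalDegree ≤ n) :
    riesz β (P * Q) = ∑ r : MIdx n, ∑ s : MIdx n,
      P.coeff (midx n r) * Q.coeff (midx n s) *
        β ((r.val.1 : ℕ) + (s.val.1 : ℕ)) ((r.val.2 : ℕ) + (s.val.2 : ℕ)) := by
  have expand : riesz β (P * Q) = ∑ u ∈ P.support, ∑ v ∈ Q.support,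
      P.coeff u * Q.coeff v * β (u 0 + v 0) (u 1 + v 1) := by
    conv_lhs => rw [MvPolynomial.as_sum P, MvPolynomial.as_sum Q, Finset.sum_mul_sum]
    rw [riesz_eq_linearCombination, AddMonoidAlgebra.coeff_sum, map_sum]
    refine Finset.sum_congr rfl fun u _ => ?_
    rw [AddMonoidAlgebra.coeff_sum, map_sum]
    refine Finset.sum_congr rfl fun v _ => ?_
    rw [MvPolynomial.monomial_mul, ← riesz_eq_linearCombination, riesz_monomial]
    simp [Finsupp.add_apply]
  rw [expand]
  symm
  calc ∑ r : MIdx n, ∑ s : MIdx n,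
        P.coeff (midx n r) * Q.coeff (midx n s) *
          β ((r.val.1 : ℕ) + (s.val.1 : ℕ)) ((r.val.2 : ℕ) + (s.val.2 : ℕ))
      = ∑ r : MIdx n, P.coeff (midx n r) *
          (∑ v ∈ Q.support, Q.coeff v * β (midx n r 0 + v 0) (midx n r 1 + v 1)) := by
        refine Finset.sum_congr rfl fun r _ => ?_
        rw [← sum_midx n Q hQ (fun v => β (midx n r 0 + v 0) (midx n r 1 + v 1)),
          Finset.mul_sum]
        refine Finset.sum_congr rfl fun s _ => ?_
        rw [midx_apply_zero, midx_apply_one, midx_apply_zero, midx_apply_one]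
        ring
    _ = ∑ u ∈ P.support, P.coeff u *
          (∑ v ∈ Q.support, Q.coeff v * β (u 0 + v 0) (u 1 + v 1)) :=
        sum_midx n P hP (fun u => ∑ v ∈ Q.support, Q.coeff v * β (u 0 + v 0) (u 1 + v 1))
    _ = ∑ u ∈ P.support, ∑ v ∈ Q.support,
          P.coeff u * Q.coeff v * β (u 0 + v 0) (u 1 + v 1) := by
        refine Finset.sum_congr rfl fun u _ => ?_
        rw [Finset.mul_sum]
        exact Finset.sum_congr rfl fun v _ => by ring

lemma degAff (a b c : ℝ) :
    (C a + C b * X 0 + C c * X 1 : MvPolynomial (Fin 2) ℝ).totalDegree ≤ 1 := by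
  have h1 : (C b * X 0 : MvPolynomial (Fin 2) ℝ).totalDegree ≤ 1 :=
    (totalDegree_mul _ _).trans (by simp [totalDegree_X])
  have h2 : (C c * X 1 : MvPolynomial (Fin 2) ℝ).totalDegree ≤ 1 :=
    (totalDegree_mul _ _).trans (by simp [totalDegree_X])
  exact (totalDegree_add _ _).trans (max_le ((totalDegree_add _ _).trans
    (max_le (by simp) h1)) h2)

lemma degAffPow (a b c d e f : ℝ) (i j n : ℕ) (h : i + j ≤ n) :
    ((C a + C b * X 0 + C c * X 1 : MvPolynomial (Fin 2) ℝ) ^ i *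
      (C d + C e * X 0 + C f * X 1) ^ j).totalDegree ≤ n := by
  refine (totalDegree_mul _ _).trans (le_trans (add_le_add
    ((totalDegree_pow _ _).trans ?_) ((totalDegree_pow _ _).trans ?_)) h)
  · calc i * (C a + C b * X 0 + C c * X 1 : MvPolynomial (Fin 2) ℝ).totalDegree
        ≤ i * 1 := Nat.mul_le_mul_left i (degAff a b c)
      _ = i := Nat.mul_one i
  · calc j * (C d + C e * X 0 + C f * X 1 : MvPolynomial (Fin 2) ℝ).totalDegree
        ≤ j * 1 := Nat.mul_le_mul_left j (degAff d e f)
      _ = j := Nat.mul_one j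

lemma degMon (i j n : ℕ) (h : i + j ≤ n) :
    ((X 0 : MvPolynomial (Fin 2) ℝ) ^ i * X 1 ^ j).totalDegree ≤ n := by
  refine (totalDegree_mul _ _).trans (le_trans (add_le_add
    ((totalDegree_pow _ _).trans ?_) ((totalDegree_pow _ _).trans ?_)) h) <;>
  simp [totalDegree_X]

lemma psiComp_mon (a b c d e f : ℝ) (i j : ℕ) :
    psiComp a b c d e f ((X 0 : MvPolynomial (Fin 2) ℝ) ^ i * X 1 ^ j) =
    (C a + C b * X 0 + C c * X 1) ^ i * (C d + C e * X 0 + C f * X 1) ^ j := by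
  simp [psiComp]

lemma mon_eq_monomial (n : ℕ) (p : MIdx n) :
    ((X 0 : MvPolynomial (Fin 2) ℝ) ^ (p.val.1 : ℕ) * X 1 ^ (p.val.2 : ℕ))
      = monomial (midx n p) 1 := by
  rw [MvPolynomial.X_pow_eq_monomial, MvPolynomial.X_pow_eq_monomial,
    MvPolynomial.monomial_mul, one_mul, midx]

lemma polyVec_mon (n : ℕ) (p : MIdx n) :
    polyVec n ((X 0 : MvPolynomial (Fin 2) ℝ) ^ (p.val.1 : ℕ) * X 1 ^ (p.val.2 : ℕ))
      = Pi.single p 1 := by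
  funext r
  rw [polyVec_eq, mon_eq_monomial, MvPolynomial.coeff_monomial]
  by_cases h : r = p
  · subst h; simp
  · rw [if_neg (fun hc => h (midx_injective n hc.symm)), Pi.single_apply, if_neg h]

lemma expandAff (a b c d e f k0 k1 k2 : ℝ) :
    (C k0 + C k1 * (C a + C b * X 0 + C c * X 1) + C k2 * (C d + C e * X 0 + C f * X 1)
      : MvPolynomial (Fin 2) ℝ)
    = C (k0 + k1*a + k2*d) + C (k1*b + k2*e) * X 0 + C (k1*c + k2*f) * X 1 := by
  simp only [MvPolynomial.C_add, MvPolynomial.C_mul]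
  ring

lemma psi_inv (a b c d e f : ℝ) (hdet : b * f - c * e ≠ 0) (p : MvPolynomial (Fin 2) ℝ) :
    psiComp a b c d e f
      (psiComp ((c*d - a*f)/(b*f - c*e)) (f/(b*f - c*e)) (-c/(b*f - c*e))
        ((a*e - b*d)/(b*f - c*e)) (-e/(b*f - c*e)) (b/(b*f - c*e)) p)
      = p := by
  show MvPolynomial.bind₁ _ (MvPolynomial.bind₁ _ p) = p
  rw [MvPolynomial.bind₁_bind₁]
  have h : (fun i : Fin 2 => MvPolynomial.bind₁
      ![C a + C b * X 0 + C c * X 1, C d + C e * X 0 + C f * X 1]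
      (![C ((c*d - a*f)/(b*f - c*e)) + C (f/(b*f - c*e)) * X 0 + C (-c/(b*f - c*e)) * X 1,
         C ((a*e - b*d)/(b*f - c*e)) + C (-e/(b*f - c*e)) * X 0 + C (b/(b*f - c*e)) * X 1] i))
      = X := by
    funext i
    fin_cases i
    · have h0 : (c*d - a*f)/(b*f - c*e) + (f/(b*f - c*e)) * a + (-c/(b*f - c*e)) * d = 0 := by
        field_simp; ring
      have h1 : (f/(b*f - c*e)) * b + (-c/(b*f - c*e)) * e = 1 := by
        rw [div_mul_eq_mul_div, div_mul_eq_mul_div, ← add_div, div_eq_one_iff_eq hdet]; ring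
      have h2 : (f/(b*f - c*e)) * c + (-c/(b*f - c*e)) * f = 0 := by
        field_simp; ring
      simp only [Matrix.cons_val_zero, _root_.map_add, _root_.map_mul,
        MvPolynomial.bind₁_C_right, MvPolynomial.bind₁_X_right, Matrix.cons_val_one,
        Matrix.head_cons, Fin.zero_eta, Fin.isValue]
      rw [expandAff, h0, h1, h2]
      simp
    · have h0 : (a*e - b*d)/(b*f - c*e) + (-e/(b*f - c*e)) * a + (b/(b*f - c*e)) * d = 0 := by
        field_simp; ring
      have h1 : (-e/(b*f - c*e)) * b + (b/(b*f - c*e)) * e = 0 := by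
        field_simp; ring
      have h2 : (-e/(b*f - c*e)) * c + (b/(b*f - c*e)) * f = 1 := by
        rw [div_mul_eq_mul_div, div_mul_eq_mul_div, ← add_div, div_eq_one_iff_eq hdet]; ring
      simp only [Matrix.cons_val_zero, _root_.map_add, _root_.map_mul,
        MvPolynomial.bind₁_C_right, MvPolynomial.bind₁_X_right, Matrix.cons_val_one,
        Matrix.head_cons, Fin.mk_one, Fin.isValue]
      rw [expandAff, h0, h1, h2]
      simp
  rw [h, MvPolynomial.bind₁_X_left]
  simp

/-- Invariance under degree-one transformations, parts (1)–(2).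
If `J` is the matrix acting on coefficient vectors of polynomials of degree ≤ n by
`J p̂ = (p ∘ Ψ)^`, then `J` is invertible and `M̃(n) = Jᵀ M(n) J`. -/
theorem momentMatrix_transform_eq_conjugation
    (n : ℕ) (hn : 1 ≤ n) (β : ℕ → ℕ → ℝ) (a b c d e f : ℝ)
    (hdet : b * f - c * e ≠ 0)
    (J : Matrix (MIdx n) (MIdx n) ℝ)
    (hJ : ∀ p : MvPolynomial (Fin 2) ℝ, p.totalDegree ≤ n →
      J.mulVec (polyVec n p) = polyVec n (psiComp a b c d e f p)) :
    IsUnit J ∧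
    momentMatrix n (transSeq β a b c d e f) = Jᵀ * momentMatrix n β * J := by
  classical
  -- columns of J
  have hcol : ∀ (p' : MIdx n) (r : MIdx n), J r p' =
      MvPolynomial.coeff (midx n r)
        ((C a + C b * X 0 + C c * X 1 : MvPolynomial (Fin 2) ℝ) ^ (p'.val.1 : ℕ) *
          (C d + C e * X 0 + C f * X 1) ^ (p'.val.2 : ℕ)) := by
    intro p' r
    have hdeg := degMon (p'.val.1 : ℕ) (p'.val.2 : ℕ) n p'.prop
    have h := hJ _ hdeg
    rw [polyVec_mon, Matrix.mulVec_single, psiComp_mon] at h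
    have h2 := congrFun h r
    simpa [polyVec_eq] using h2
  -- the inverse matrix
  set J' : Matrix (MIdx n) (MIdx n) ℝ := Matrix.of fun r p' =>
    polyVec n (psiComp ((c*d - a*f)/(b*f - c*e)) (f/(b*f - c*e)) (-c/(b*f - c*e))
      ((a*e - b*d)/(b*f - c*e)) (-e/(b*f - c*e)) (b/(b*f - c*e))
      ((X 0 : MvPolynomial (Fin 2) ℝ) ^ (p'.val.1 : ℕ) * X 1 ^ (p'.val.2 : ℕ))) r with hJ'def
  have hJJ' : J * J' = 1 := by
    ext r p'
    have hdegΦ : (psiComp ((c*d - a*f)/(b*f - c*e)) (f/(b*f - c*e)) (-c/(b*f - c*e))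
        ((a*e - b*d)/(b*f - c*e)) (-e/(b*f - c*e)) (b/(b*f - c*e))
        ((X 0 : MvPolynomial (Fin 2) ℝ) ^ (p'.val.1 : ℕ) * X 1 ^ (p'.val.2 : ℕ))).totalDegree
        ≤ n := by
      rw [psiComp_mon]
      exact degAffPow _ _ _ _ _ _ _ _ n p'.prop
    have h := congrFun (hJ _ hdegΦ) r
    rw [psi_inv a b c d e f hdet, polyVec_mon] at h
    simp only [Matrix.mulVec, dotProduct] at h
    rw [Matrix.mul_apply, Matrix.one_apply]
    rw [show ∑ s, J r s * J' s p'
        = ∑ s, J r s * polyVec n (psiComp ((c*d - a*f)/(b*f - c*e)) (f/(b*f - c*e))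
            (-c/(b*f - c*e)) ((a*e - b*d)/(b*f - c*e)) (-e/(b*f - c*e)) (b/(b*f - c*e))
            ((X 0 : MvPolynomial (Fin 2) ℝ) ^ (p'.val.1 : ℕ) * X 1 ^ (p'.val.2 : ℕ))) s
      from rfl]
    rw [h, Pi.single_apply]
  constructor
  · exact (Matrix.isUnit_iff_isUnit_det J).mpr (IsUnit.of_mul_eq_one J'.det
      (by rw [← Matrix.det_mul, hJJ', Matrix.det_one]))
  · ext p q
    have hdp := degAffPow a b c d e f (p.val.1 : ℕ) (p.val.2 : ℕ) n p.prop
    have hdq := degAffPow a b c d e f (q.val.1 : ℕ) (q.val.2 : ℕ) n q.prop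
    calc momentMatrix n (transSeq β a b c d e f) p q
        = riesz β (((C a + C b * X 0 + C c * X 1 : MvPolynomial (Fin 2) ℝ) ^ (p.val.1 : ℕ) *
            (C d + C e * X 0 + C f * X 1) ^ (p.val.2 : ℕ)) *
            ((C a + C b * X 0 + C c * X 1) ^ (q.val.1 : ℕ) *
            (C d + C e * X 0 + C f * X 1) ^ (q.val.2 : ℕ))) := by
          show riesz β _ = _
          congr 1
          rw [pow_add, pow_add]
          ring
      _ = ∑ r : MIdx n, ∑ s : MIdx n,
            MvPolynomial.coeff (midx n r)
              ((C a + C b * X 0 + C c * X 1 : MvPolynomial (Fin 2) ℝ) ^ (p.val.1 : ℕ) *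
                (C d + C e * X 0 + C f * X 1) ^ (p.val.2 : ℕ)) *
            MvPolynomial.coeff (midx n s)
              ((C a + C b * X 0 + C c * X 1 : MvPolynomial (Fin 2) ℝ) ^ (q.val.1 : ℕ) *
                (C d + C e * X 0 + C f * X 1) ^ (q.val.2 : ℕ)) *
            β ((r.val.1 : ℕ) + (s.val.1 : ℕ)) ((r.val.2 : ℕ) + (s.val.2 : ℕ)) :=
          riesz_mul n β _ _ hdp hdq
      _ = (Jᵀ * momentMatrix n β * J) p q := by
          simp only [Matrix.mul_apply, Matrix.transpose_apply, momentMatrix, Finset.sum_mul]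
          rw [Finset.sum_comm]
          refine Finset.sum_congr rfl fun r _ => Finset.sum_congr rfl fun s _ => ?_
          rw [hcol p s, hcol q r]
          ring
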